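/- Let X ∈ M_{n×p} have singular values σ_1 ≥ … ≥ σ_n, let ε > 0, let XX* = U Σ² U* be an eigendecomposition with Σ = diag(σ_1,…,σ_n), and set W = U Σ_ε^{−1} U* with Σ_ε = diag(max{σ_j, ε}). Then 𝒥(X,W) = ½(‖W^{1/2}X‖_F² + ‖W^{−1/2}‖_F²) = Σ_{i : σ_i ≥ ε} σ_i + Σ_{i : σ_i < ε} (σ_i² + ε²)/(2ε) = 𝒥_ε(X), where 𝒥_ε(X) = Σ_{i=1}^n j^ε(σ_i(X)) with j^ε(u) = |u| if |u| ≥ ε and j^ε(u) = (u² + ε²)/(2ε) if |u| < ε. -/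

import Mathlib

open Matrix
open scoped ComplexOrder

namespace IRLSM

/-- Frobenius inner product `⟨X,Y⟩ = Tr(X Yᴴ)`. -/
noncomputable def frobInner {n p : ℕ} (X Y : Matrix (Fin n) (Fin p) ℂ) : ℂ :=
  Matrix.trace (X * Yᴴ)

/-- Frobenius norm. -/
noncomputable def frobNorm {n p : ℕ} (X : Matrix (Fin n) (Fin p) ℂ) : ℝ :=
  Real.sqrt (∑ i, ∑ j, Complex.normSq (X i j))

/-- Singular values of `X` in nonincreasing order, `sv X 0 = σ₁ ≥ sv X 1 = σ₂ ≥ …`;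
indices `≥ n` give `0`. -/
noncomputable def sv {n p : ℕ} (X : Matrix (Fin n) (Fin p) ℂ) : ℕ → ℝ :=
  fun i => ((List.ofFn fun j : Fin n =>
      Real.sqrt ((Matrix.isHermitian_mul_conjTranspose_self X).eigenvalues j)).mergeSort
      (fun a b => decide (b ≤ a))).getD i 0

/-- Nuclear norm `‖X‖_* = ∑ σᵢ(X)`. -/
noncomputable def nuclearNorm {n p : ℕ} (X : Matrix (Fin n) (Fin p) ℂ) : ℝ :=
  ∑ i : Fin n, sv X (i : ℕ)

/-- Positive square root of a positive semidefinite matrix (junk value `0` otherwise). -/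
noncomputable def matSqrt {n : ℕ} (W : Matrix (Fin n) (Fin n) ℂ) : Matrix (Fin n) (Fin n) ℂ :=
  @dite _ W.PosSemidef (Classical.dec _) (fun h => (h.1.eigenvectorUnitary : Matrix (Fin n) (Fin n) ℂ) *
    Matrix.diagonal (fun i => ((Real.sqrt (h.1.eigenvalues i) : ℝ) : ℂ)) *
    (star h.1.eigenvectorUnitary : Matrix (Fin n) (Fin n) ℂ)) (fun _ => 0)

/-- The functional `𝒥(X,W) = ½(‖W^{1/2}X‖_F² + ‖W^{-1/2}‖_F²)`. -/
noncomputable def Jfun {n p : ℕ} (X : Matrix (Fin n) (Fin p) ℂ)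
    (W : Matrix (Fin n) (Fin n) ℂ) : ℝ :=
  (frobNorm (matSqrt W * X) ^ 2 + frobNorm (matSqrt W⁻¹) ^ 2) / 2

/-- The restricted isometry constant `δ_k(𝒮)`: the smallest `δ ≥ 0` such that
`(1-δ)‖X‖_F² ≤ ‖𝒮(X)‖² ≤ (1+δ)‖X‖_F²` for all `X` of rank at most `k`. -/
noncomputable def ripConst {n p m : ℕ}
    (S : Matrix (Fin n) (Fin p) ℂ →ₗ[ℂ] (Fin m → ℂ)) (k : ℕ) : ℝ :=
  sInf {δ : ℝ | 0 ≤ δ ∧ ∀ X : Matrix (Fin n) (Fin p) ℂ, X.rank ≤ k →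
    (1 - δ) * frobNorm X ^ 2 ≤ ∑ i, Complex.normSq (S X i) ∧
      ∑ i, Complex.normSq (S X i) ≤ (1 + δ) * frobNorm X ^ 2}

/-- The rank null space property of order `k`. -/
def RNSP {n p m : ℕ} (S : Matrix (Fin n) (Fin p) ℂ →ₗ[ℂ] (Fin m → ℂ)) (k : ℕ) : Prop :=
  ∀ H : Matrix (Fin n) (Fin p) ℂ, S H = 0 → H ≠ 0 →
    ∀ H₁ H₂ : Matrix (Fin n) (Fin p) ℂ, H = H₁ + H₂ → H₁.rank ≤ k →
      nuclearNorm H₁ < nuclearNorm H₂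

/-- The strong rank null space property of order `k` with constant `η`. -/
def SRNSP {n p m : ℕ} (S : Matrix (Fin n) (Fin p) ℂ →ₗ[ℂ] (Fin m → ℂ)) (k : ℕ) (η : ℝ) : Prop :=
  ∀ X : Matrix (Fin n) (Fin p) ℂ, S X = 0 → X ≠ 0 →
    ∀ X₁ X₂ : Matrix (Fin n) (Fin p) ℂ, X = X₁ + X₂ → X₁.rank ≤ k →
      ∃ H₁ H₂ : Matrix (Fin n) (Fin p) ℂ, X = H₁ + H₂ ∧ H₁.rank ≤ 2 * k ∧
        frobInner H₁ H₂ = 0 ∧ X₁ * H₂ᴴ = 0 ∧ X₁ᴴ * H₂ = 0 ∧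
        nuclearNorm H₁ ≤ η * nuclearNorm H₂

/-- Best `k`-rank approximation error in the nuclear norm, `ρ_k(X)_*`. -/
noncomputable def rhoNuc {n p : ℕ} (k : ℕ) (X : Matrix (Fin n) (Fin p) ℂ) : ℝ :=
  sInf ((fun Z => nuclearNorm (X - Z)) '' {Z : Matrix (Fin n) (Fin p) ℂ | Z.rank ≤ k})

/-- `j^ε(u) = |u|` for `|u| ≥ ε` and `(u² + ε²)/(2ε)` otherwise. -/
noncomputable def jeps (ε u : ℝ) : ℝ :=
  if ε ≤ |u| then |u| else (u ^ 2 + ε ^ 2) / (2 * ε)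

/-- The functional `𝒥_ε(X) = ∑ᵢ j^ε(σᵢ(X))`. -/
noncomputable def Jeps {n p : ℕ} (ε : ℝ) (X : Matrix (Fin n) (Fin p) ℂ) : ℝ :=
  ∑ i : Fin n, jeps ε (sv X (i : ℕ))

/-- `(X^ℓ, W^ℓ, ε_ℓ)_ℓ` is an output of the IRLS-M algorithm with measurement map `S`,
data `M`, parameters `γ > 0` and `K`.  Here `X (ℓ+1)` is the weighted least squares
minimizer for the weight `W ℓ`, `ε (ℓ+1) = min (ε ℓ) (γ σ_{K+1}(X^{ℓ+1}))`, and
`W (ℓ+1)` is built from an eigendecomposition of `X^{ℓ+1}(X^{ℓ+1})ᴴ` together with the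
`ε`-stabilization of the singular values.  If `ε` reaches `0` the algorithm stops. -/
structure IsIRLSM {n p m : ℕ} (S : Matrix (Fin n) (Fin p) ℂ →ₗ[ℂ] (Fin m → ℂ))
    (M : Fin m → ℂ) (γ : ℝ) (K : ℕ)
    (X : ℕ → Matrix (Fin n) (Fin p) ℂ)
    (W : ℕ → Matrix (Fin n) (Fin n) ℂ)
    (ε : ℕ → ℝ) : Prop where
  w_init : W 0 = 1
  eps_init : ε 0 = 1
  x_feasible : ∀ ℓ : ℕ, ε ℓ ≠ 0 → S (X (ℓ + 1)) = M
  x_min : ∀ ℓ : ℕ, ε ℓ ≠ 0 → ∀ Y : Matrix (Fin n) (Fin p) ℂ, S Y = M →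
    frobNorm (matSqrt (W ℓ) * X (ℓ + 1)) ^ 2 ≤ frobNorm (matSqrt (W ℓ) * Y) ^ 2
  eps_update : ∀ ℓ : ℕ, ε ℓ ≠ 0 → ε (ℓ + 1) = min (ε ℓ) (γ * sv (X (ℓ + 1)) K)
  w_update : ∀ ℓ : ℕ, ε ℓ ≠ 0 → ε (ℓ + 1) ≠ 0 →
    ∃ U : Matrix (Fin n) (Fin n) ℂ, U * Uᴴ = 1 ∧ Uᴴ * U = 1 ∧
      X (ℓ + 1) * (X (ℓ + 1))ᴴ =
        U * Matrix.diagonal (fun i : Fin n => ((sv (X (ℓ + 1)) (i : ℕ) : ℂ)) ^ 2) * Uᴴ ∧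
      W (ℓ + 1) =
        U * Matrix.diagonal
            (fun i : Fin n => (((max (sv (X (ℓ + 1)) (i : ℕ)) (ε (ℓ + 1)) : ℝ) : ℂ))⁻¹) * Uᴴ
  w_stop : ∀ ℓ : ℕ, ε ℓ ≠ 0 → ε (ℓ + 1) = 0 → W (ℓ + 1) = W ℓ
  stopped : ∀ ℓ : ℕ, ε ℓ = 0 → X (ℓ + 1) = X ℓ ∧ W (ℓ + 1) = W ℓ ∧ ε (ℓ + 1) = 0


lemma sv_nonneg {n p : ℕ} (X : Matrix (Fin n) (Fin p) ℂ) (i : ℕ) : 0 ≤ sv X i := by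
  unfold sv
  set l := ((List.ofFn fun j : Fin n =>
      Real.sqrt ((Matrix.isHermitian_mul_conjTranspose_self X).eigenvalues j)).mergeSort
      (fun a b => decide (b ≤ a))) with hl
  have hall : ∀ x ∈ l, 0 ≤ x := by
    intro x hx
    have hx' := (List.mergeSort_perm _ _).mem_iff.mp (hl ▸ hx)
    rw [List.mem_ofFn] at hx'
    obtain ⟨j, rfl⟩ := hx'
    exact Real.sqrt_nonneg _
  by_cases h : i < l.length
  · rw [List.getD_eq_getElem l 0 h]
    exact hall _ (List.getElem_mem h)
  · rw [List.getD_eq_default l 0 (le_of_not_gt h)]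

lemma frobNorm_sq_eq_re_trace {n p : ℕ} (A : Matrix (Fin n) (Fin p) ℂ) :
    frobNorm A ^ 2 = (Matrix.trace (A * Aᴴ)).re := by
  rw [frobNorm, Real.sq_sqrt (Finset.sum_nonneg fun i _ =>
    Finset.sum_nonneg fun j _ => Complex.normSq_nonneg (A i j))]
  have : Matrix.trace (A * Aᴴ) = ∑ i, ∑ j, (Complex.normSq (A i j) : ℂ) := by
    simp [Matrix.trace, Matrix.mul_apply, Matrix.conjTranspose_apply, Matrix.diag,
      Complex.mul_conj]
  rw [this]
  simp

lemma conj_mul_conj {n : ℕ} (U A B : Matrix (Fin n) (Fin n) ℂ) (hU' : Uᴴ * U = 1) :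
    (U * A * Uᴴ) * (U * B * Uᴴ) = U * (A * B) * Uᴴ := by
  rw [show (U * A * Uᴴ) * (U * B * Uᴴ) = U * A * (Uᴴ * U) * B * Uᴴ by
    simp only [Matrix.mul_assoc], hU']
  simp [Matrix.mul_assoc]

lemma trace_conj {n : ℕ} (U A : Matrix (Fin n) (Fin n) ℂ) (hU' : Uᴴ * U = 1) :
    Matrix.trace (U * A * Uᴴ) = Matrix.trace A := by
  rw [Matrix.trace_mul_comm, ← Matrix.mul_assoc, hU', Matrix.one_mul]

lemma matSqrt_herm_mul_self {n : ℕ} (W : Matrix (Fin n) (Fin n) ℂ) (h : W.PosSemidef) :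
    (matSqrt W)ᴴ = matSqrt W ∧ matSqrt W * matSqrt W = W := by
  have hs : matSqrt W = (h.1.eigenvectorUnitary : Matrix (Fin n) (Fin n) ℂ) *
      Matrix.diagonal (fun i => ((Real.sqrt (h.1.eigenvalues i) : ℝ) : ℂ)) *
      (star h.1.eigenvectorUnitary : Matrix (Fin n) (Fin n) ℂ) := by
    rw [matSqrt, dif_pos h]
  have hVV : (star h.1.eigenvectorUnitary : Matrix (Fin n) (Fin n) ℂ) *
      (h.1.eigenvectorUnitary : Matrix (Fin n) (Fin n) ℂ) = 1 :=
    Unitary.star_mul_self_of_mem h.1.eigenvectorUnitary.prop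
  have hW : W = (h.1.eigenvectorUnitary : Matrix (Fin n) (Fin n) ℂ) *
      Matrix.diagonal (fun i => ((h.1.eigenvalues i : ℝ) : ℂ)) *
      (star h.1.eigenvectorUnitary : Matrix (Fin n) (Fin n) ℂ) := by
    have := h.1.spectral_theorem
    rw [Unitary.conjStarAlgAut_apply] at this
    exact this
  have hd := h.eigenvalues_nonneg
  generalize (h.1.eigenvectorUnitary : Matrix (Fin n) (Fin n) ℂ) = V at hs hVV hW
  generalize h.1.eigenvalues = d at hs hW hd
  generalize matSqrt W = S at hs ⊢
  subst hs hW
  constructor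
  · have hD : (Matrix.diagonal (fun i => ((Real.sqrt (d i) : ℝ) : ℂ)))ᴴ =
        Matrix.diagonal (fun i => ((Real.sqrt (d i) : ℝ) : ℂ)) := by
      rw [Matrix.diagonal_conjTranspose]
      congr 1
      funext i
      simp
    rw [Matrix.conjTranspose_mul, Matrix.conjTranspose_mul, hD, Matrix.star_eq_conjTranspose,
      Matrix.conjTranspose_conjTranspose]
    simp only [Matrix.mul_assoc]
  · rw [show ∀ A B C D E F : Matrix (Fin n) (Fin n) ℂ, A * B * C * (D * E * F) =
      A * B * (C * D) * E * F from fun _ _ _ _ _ _ => by simp only [Matrix.mul_assoc], hVV,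
      Matrix.mul_one, Matrix.mul_assoc V, Matrix.diagonal_mul_diagonal]
    have hsq : ∀ i, ((Real.sqrt (d i) : ℝ) : ℂ) * ((Real.sqrt (d i) : ℝ) : ℂ) = (d i : ℂ) :=
      fun i => by rw [← Complex.ofReal_mul, Real.mul_self_sqrt (hd i)]
    simp only [hsq]

lemma trace_matSqrt_mul {n p : ℕ} (W : Matrix (Fin n) (Fin n) ℂ) (h : W.PosSemidef)
    (X : Matrix (Fin n) (Fin p) ℂ) :
    Matrix.trace ((matSqrt W * X) * (matSqrt W * X)ᴴ) = Matrix.trace (W * (X * Xᴴ)) := by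
  rw [Matrix.conjTranspose_mul, (matSqrt_herm_mul_self W h).1]
  rw [show matSqrt W * X * (Xᴴ * matSqrt W) = matSqrt W * (X * Xᴴ) * matSqrt W by
    simp only [Matrix.mul_assoc]]
  rw [Matrix.trace_mul_comm, ← Matrix.mul_assoc, (matSqrt_herm_mul_self W h).2]

lemma matSqrt_mul_conjTranspose {n : ℕ} (W : Matrix (Fin n) (Fin n) ℂ) (h : W.PosSemidef) :
    matSqrt W * (matSqrt W)ᴴ = W := by
  rw [(matSqrt_herm_mul_self W h).1, (matSqrt_herm_mul_self W h).2]

lemma posSemidef_conj_diag {n : ℕ} (d : Fin n → ℝ) (hd : ∀ i, 0 ≤ d i)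
    (U : Matrix (Fin n) (Fin n) ℂ) :
    (U * Matrix.diagonal (fun i => (d i : ℂ)) * Uᴴ).PosSemidef :=
  Matrix.PosSemidef.mul_mul_conjTranspose_same
    (Matrix.posSemidef_diagonal_iff.mpr fun i => by
      simpa using Complex.zero_le_real.mpr (hd i)) U

/-- explicit value of `𝒥(X, W)` for the IRLS-M weight matrix:
`𝒥(X,W) = ∑_(σᵢ ≥ ε) σᵢ + ∑_(σᵢ < ε) (σᵢ² + ε²)/(2ε) = 𝒥_ε(X)`. -/
theorem statement8 {n p : ℕ} (hnp : n ≤ p) (ε : ℝ) (hε : 0 < ε)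
    (X : Matrix (Fin n) (Fin p) ℂ)
    (U : Matrix (Fin n) (Fin n) ℂ) (hU : U * Uᴴ = 1) (hU' : Uᴴ * U = 1)
    (hdecomp : X * Xᴴ =
      U * Matrix.diagonal (fun i : Fin n => ((sv X (i : ℕ) : ℂ)) ^ 2) * Uᴴ)
    (W : Matrix (Fin n) (Fin n) ℂ)
    (hW : W = U * Matrix.diagonal
        (fun i : Fin n => (((max (sv X (i : ℕ)) ε : ℝ)) : ℂ)⁻¹) * Uᴴ) :
    Jfun X W =
        (∑ i ∈ Finset.univ.filter (fun i : Fin n => ε ≤ sv X (i : ℕ)), sv X (i : ℕ)) +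
          ∑ i ∈ Finset.univ.filter (fun i : Fin n => sv X (i : ℕ) < ε),
            ((sv X (i : ℕ)) ^ 2 + ε ^ 2) / (2 * ε) ∧
      Jfun X W = Jeps ε X := by
  have hσ : ∀ i : Fin n, 0 ≤ sv X (i : ℕ) := fun i => sv_nonneg X i
  set m : Fin n → ℝ := fun i => max (sv X (i : ℕ)) ε with hmdef
  have hm : ∀ i, 0 < m i := fun i => lt_of_lt_of_le hε (le_max_right _ _)
  have hW' : W = U * Matrix.diagonal (fun i : Fin n => (((m i)⁻¹ : ℝ) : ℂ)) * Uᴴ := by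
    rw [hW]; congr 2; funext i; push_cast; rfl
  have hWps : W.PosSemidef := by
    rw [hW']; exact posSemidef_conj_diag _ (fun i => inv_nonneg.mpr (hm i).le) U
  have hWinv : W⁻¹ = U * Matrix.diagonal (fun i : Fin n => ((m i : ℝ) : ℂ)) * Uᴴ := by
    apply Matrix.inv_eq_right_inv
    rw [hW', conj_mul_conj _ _ _ hU', Matrix.diagonal_mul_diagonal]
    have hone : (fun i : Fin n => (((m i)⁻¹ : ℝ) : ℂ) * ((m i : ℝ) : ℂ)) =
        fun _ => (1 : ℂ) := by
      funext i
      rw [← Complex.ofReal_mul, inv_mul_cancel₀ (hm i).ne']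
      norm_num
    rw [hone, Matrix.diagonal_one, Matrix.mul_one, hU]
  have hWinvps : W⁻¹.PosSemidef := by
    rw [hWinv]; exact posSemidef_conj_diag _ (fun i => (hm i).le) U
  have h1 : frobNorm (matSqrt W * X) ^ 2 = ∑ i : Fin n, (sv X (i : ℕ)) ^ 2 / m i := by
    rw [frobNorm_sq_eq_re_trace, trace_matSqrt_mul W hWps X, hdecomp, hW',
      conj_mul_conj _ _ _ hU', trace_conj _ _ hU', Matrix.diagonal_mul_diagonal,
      Matrix.trace_diagonal]
    have : ∀ i : Fin n, (((m i)⁻¹ : ℝ) : ℂ) * ((sv X (i : ℕ) : ℂ)) ^ 2 =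
        (((sv X (i : ℕ)) ^ 2 / m i : ℝ) : ℂ) := by
      intro i; push_cast; ring
    simp only [this]
    rw [← Complex.ofReal_sum, Complex.ofReal_re]
  have h2 : frobNorm (matSqrt W⁻¹) ^ 2 = ∑ i : Fin n, m i := by
    rw [frobNorm_sq_eq_re_trace, matSqrt_mul_conjTranspose _ hWinvps, hWinv,
      trace_conj _ _ hU', Matrix.trace_diagonal, ← Complex.ofReal_sum, Complex.ofReal_re]
  have hJ : Jfun X W = ∑ i : Fin n, ((sv X (i : ℕ)) ^ 2 / m i + m i) / 2 := by
    rw [Jfun, h1, h2, ← Finset.sum_add_distrib, Finset.sum_div]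
  have key : ∀ i : Fin n, ((sv X (i : ℕ)) ^ 2 / m i + m i) / 2 = jeps ε (sv X (i : ℕ)) := by
    intro i
    rw [jeps, abs_of_nonneg (hσ i)]
    by_cases h : ε ≤ sv X (i : ℕ)
    · have hmi : m i = sv X (i : ℕ) := max_eq_left h
      have hpos : (0 : ℝ) < sv X (i : ℕ) := lt_of_lt_of_le hε h
      rw [if_pos h, hmi]
      field_simp
      ring
    · have hmi : m i = ε := max_eq_right (le_of_not_ge h)
      rw [if_neg h, hmi]
      field_simp
  constructor
  · rw [hJ, ← Finset.sum_filter_add_sum_filter_not Finset.univ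
      (fun i : Fin n => ε ≤ sv X (i : ℕ))]
    congr 1
    · apply Finset.sum_congr rfl
      intro i hi
      have h := (Finset.mem_filter.mp hi).2
      rw [key i, jeps, abs_of_nonneg (hσ i), if_pos h]
    · rw [show (Finset.univ.filter fun i : Fin n => ¬ ε ≤ sv X (i : ℕ)) =
        Finset.univ.filter fun i : Fin n => sv X (i : ℕ) < ε by
          congr 1; funext i; simp [not_le]]
      apply Finset.sum_congr rfl
      intro i hi
      have h := (Finset.mem_filter.mp hi).2
      rw [key i, jeps, abs_of_nonneg (hσ i), if_neg (not_le.mpr h)]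
  · rw [hJ, Jeps]
    exact Finset.sum_congr rfl fun i _ => key i


end IRLSM
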